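/- Let L ∈ (0,1), γ ∈ (0,1), δ ≥ 0, ε ≥ 0 with L = γ(1+√(2δ)). If U* and U*_ε are the unique fixed points of the L-contractions R and R_ε respectively (which differ only in that R_ε uses √(Var + ε) instead of √Var), then ‖U* − U*_ε‖∞ ≤ γ√(2δε)/(1 − L). -/

import Mathlib

noncomputable def supNorm {Z : Type*} [Fintype Z] [Nonempty Z] (f : Z → ℝ) : ℝ :=
  ⨆ z, |f z|

noncomputable def vmax {S A : Type*} [Fintype A] [Nonempty A] (U : S × A → ℝ) (s : S) : ℝ :=
  ⨆ a, U (s, a)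

def expect {Ω : Type*} [Fintype Ω] (p : Ω → ℝ) (f : Ω → ℝ) : ℝ :=
  ∑ ω, p ω * f ω

noncomputable def variance {Ω : Type*} [Fintype Ω] (p : Ω → ℝ) (f : Ω → ℝ) : ℝ :=
  expect p (fun ω => f ω ^ 2) - (expect p f) ^ 2

/-- The stabilized approximate robust Bellman operator `R_ε`. -/
noncomputable def Rop {S A : Type*} [Fintype S] [Fintype A] [Nonempty A]
    (P0 : S × A → S → ℝ) (r : S × A → ℝ) (γ δ ε : ℝ) (U : S × A → ℝ) (z : S × A) : ℝ :=
  r z + γ * expect (P0 z) (vmax U)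
    - γ * Real.sqrt (2 * δ) * Real.sqrt (variance (P0 z) (vmax U) + ε)

section aux

variable {Ω : Type*} [Fintype Ω] {p f g : Ω → ℝ}

lemma expect_abs_le {M : ℝ} (hp0 : ∀ ω, 0 ≤ p ω) (hp1 : ∑ ω, p ω = 1)
    (h : ∀ ω, |f ω| ≤ M) : |expect p f| ≤ M := by
  calc |expect p f| ≤ ∑ ω, |p ω * f ω| := Finset.abs_sum_le_sum_abs _ _
    _ ≤ ∑ ω, p ω * M := by
        refine Finset.sum_le_sum fun ω _ => ?_
        rw [abs_mul, abs_of_nonneg (hp0 ω)]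
        exact mul_le_mul_of_nonneg_left (h ω) (hp0 ω)
    _ = M := by rw [← Finset.sum_mul, hp1, one_mul]

lemma expect_sq_sub (hp1 : ∑ ω, p ω = 1) (c : ℝ) :
    expect p (fun ω => (f ω - c) ^ 2) = variance p f + (expect p f - c) ^ 2 := by
  have h : ∀ ω, p ω * (f ω - c) ^ 2
      = p ω * f ω ^ 2 - 2 * c * (p ω * f ω) + c ^ 2 * p ω := fun ω => by ring
  simp only [expect, variance]
  rw [Finset.sum_congr rfl fun ω _ => h ω]
  rw [Finset.sum_add_distrib, Finset.sum_sub_distrib, ← Finset.mul_sum, ← Finset.mul_sum, hp1]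
  ring

lemma variance_nonneg' (hp0 : ∀ ω, 0 ≤ p ω) (hp1 : ∑ ω, p ω = 1) :
    0 ≤ variance p f := by
  have h := expect_sq_sub (f := f) hp1 (expect p f)
  simp only [sub_self, ne_eq, OfNat.ofNat_ne_zero, not_false_eq_true, zero_pow, add_zero] at h
  rw [← h]
  exact Finset.sum_nonneg fun ω _ => mul_nonneg (hp0 ω) (sq_nonneg _)

lemma sqrt_variance_lip {M : ℝ} (hp0 : ∀ ω, 0 ≤ p ω) (hp1 : ∑ ω, p ω = 1)
    (hM : 0 ≤ M) (h : ∀ ω, |f ω - g ω| ≤ M) :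
    Real.sqrt (variance p f) ≤ Real.sqrt (variance p g) + M := by
  set μ := expect p g with hμ
  have hvg : 0 ≤ variance p g := variance_nonneg' hp0 hp1
  -- variance p f ≤ E[(f - μ)²]
  have h1 : variance p f ≤ expect p (fun ω => (f ω - μ) ^ 2) := by
    rw [expect_sq_sub hp1 μ]; nlinarith [sq_nonneg (expect p f - μ)]
  -- expand E[(f-μ)²] = E[(g-μ)²] + 2E[(g-μ)(f-g)] + E[(f-g)²]
  have h2 : expect p (fun ω => (f ω - μ) ^ 2)
      = expect p (fun ω => (g ω - μ) ^ 2)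
        + 2 * (∑ ω, p ω * ((g ω - μ) * (f ω - g ω)))
        + expect p (fun ω => (f ω - g ω) ^ 2) := by
    simp only [expect, Finset.mul_sum, ← Finset.sum_add_distrib]
    exact Finset.sum_congr rfl fun ω _ => by ring
  have hgμ : expect p (fun ω => (g ω - μ) ^ 2) = variance p g := by
    rw [expect_sq_sub hp1 μ, ← hμ, sub_self]
    simp
  have hd2 : expect p (fun ω => (f ω - g ω) ^ 2) ≤ M ^ 2 := by
    calc expect p (fun ω => (f ω - g ω) ^ 2) ≤ ∑ ω, p ω * M ^ 2 := by
          refine Finset.sum_le_sum fun ω _ => ?_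
          refine mul_le_mul_of_nonneg_left ?_ (hp0 ω)
          have hx := abs_le.1 (h ω)
          show (f ω - g ω) ^ 2 ≤ M ^ 2
          nlinarith [hx.1, hx.2]
      _ = M ^ 2 := by rw [← Finset.sum_mul, hp1, one_mul]
  have hd2' : 0 ≤ expect p (fun ω => (f ω - g ω) ^ 2) :=
    Finset.sum_nonneg fun ω _ => mul_nonneg (hp0 ω) (sq_nonneg _)
  -- Cauchy-Schwarz on √p·(g-μ) and √p·(f-g)
  have hcs : ∑ ω, p ω * ((g ω - μ) * (f ω - g ω))
      ≤ Real.sqrt (variance p g) * M := by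
    have hcs0 : ∑ ω, p ω * ((g ω - μ) * (f ω - g ω))
        ≤ Real.sqrt (∑ ω, p ω * (g ω - μ) ^ 2) * Real.sqrt (∑ ω, p ω * (f ω - g ω) ^ 2) := by
      have hcs1 := Real.sum_mul_le_sqrt_mul_sqrt Finset.univ
        (fun ω => Real.sqrt (p ω) * (g ω - μ)) (fun ω => Real.sqrt (p ω) * (f ω - g ω))
      have e1 : ∑ ω, Real.sqrt (p ω) * (g ω - μ) * (Real.sqrt (p ω) * (f ω - g ω))
          = ∑ ω, p ω * ((g ω - μ) * (f ω - g ω)) :=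
        Finset.sum_congr rfl fun ω _ => by
          rw [show Real.sqrt (p ω) * (g ω - μ) * (Real.sqrt (p ω) * (f ω - g ω))
              = Real.sqrt (p ω) * Real.sqrt (p ω) * ((g ω - μ) * (f ω - g ω)) by ring,
            Real.mul_self_sqrt (hp0 ω)]
      have e2 : ∑ ω, (Real.sqrt (p ω) * (g ω - μ)) ^ 2 = ∑ ω, p ω * (g ω - μ) ^ 2 :=
        Finset.sum_congr rfl fun ω _ => by rw [mul_pow, Real.sq_sqrt (hp0 ω)]
      have e3 : ∑ ω, (Real.sqrt (p ω) * (f ω - g ω)) ^ 2 = ∑ ω, p ω * (f ω - g ω) ^ 2 :=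
        Finset.sum_congr rfl fun ω _ => by rw [mul_pow, Real.sq_sqrt (hp0 ω)]
      rw [e1, e2, e3] at hcs1
      exact hcs1
    have hvg' : (∑ ω, p ω * (g ω - μ) ^ 2) = variance p g := hgμ
    rw [hvg'] at hcs0
    refine hcs0.trans (mul_le_mul_of_nonneg_left ?_ (Real.sqrt_nonneg _))
    calc Real.sqrt (∑ ω, p ω * (f ω - g ω) ^ 2) ≤ Real.sqrt (M ^ 2) :=
          Real.sqrt_le_sqrt hd2
      _ = M := Real.sqrt_sq hM
  -- combine: variance p f ≤ (√(variance p g) + M)^2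
  have key : variance p f ≤ (Real.sqrt (variance p g) + M) ^ 2 := by
    have hsg : Real.sqrt (variance p g) ^ 2 = variance p g := Real.sq_sqrt hvg
    calc variance p f ≤ expect p (fun ω => (f ω - μ) ^ 2) := h1
      _ = variance p g + 2 * (∑ ω, p ω * ((g ω - μ) * (f ω - g ω)))
            + expect p (fun ω => (f ω - g ω) ^ 2) := by rw [h2, hgμ]
      _ ≤ variance p g + 2 * (Real.sqrt (variance p g) * M) + M ^ 2 := by linarith
      _ = (Real.sqrt (variance p g) + M) ^ 2 := by rw [add_sq, hsg]; ring
  calc Real.sqrt (variance p f) ≤ Real.sqrt ((Real.sqrt (variance p g) + M) ^ 2) :=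
        Real.sqrt_le_sqrt key
    _ = Real.sqrt (variance p g) + M :=
        Real.sqrt_sq (by positivity)

lemma sqrt_add_eps_lip {a b M ε : ℝ} (ha : 0 ≤ a) (hb : 0 ≤ b) (hM : 0 ≤ M) (hε : 0 ≤ ε)
    (h : Real.sqrt a ≤ Real.sqrt b + M) :
    Real.sqrt (a + ε) ≤ Real.sqrt (b + ε) + M := by
  have hsb : Real.sqrt b ≤ Real.sqrt (b + ε) := Real.sqrt_le_sqrt (by linarith)
  have ha' : a ≤ (Real.sqrt b + M) ^ 2 := by
    have := Real.sq_sqrt ha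
    nlinarith [Real.sqrt_nonneg a, Real.sqrt_nonneg b]
  have hbe : Real.sqrt (b + ε) ^ 2 = b + ε := Real.sq_sqrt (by linarith)
  have hb2 : Real.sqrt b ^ 2 = b := Real.sq_sqrt hb
  have key : a + ε ≤ (Real.sqrt (b + ε) + M) ^ 2 := by nlinarith [Real.sqrt_nonneg b]
  calc Real.sqrt (a + ε) ≤ Real.sqrt ((Real.sqrt (b + ε) + M) ^ 2) := Real.sqrt_le_sqrt key
    _ = Real.sqrt (b + ε) + M := Real.sqrt_sq (by positivity)

end aux

section supnorm

variable {Z : Type*} [Fintype Z] [Nonempty Z]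

lemma abs_le_supNorm (f : Z → ℝ) (z : Z) : |f z| ≤ supNorm f := by
  show |f z| ≤ ⨆ z, |f z|
  exact le_ciSup (f := fun z => |f z|) (Set.Finite.bddAbove (Set.finite_range _)) z

lemma supNorm_le {f : Z → ℝ} {M : ℝ} (h : ∀ z, |f z| ≤ M) : supNorm f ≤ M := by
  show (⨆ z, |f z|) ≤ M
  exact ciSup_le h

end supnorm

lemma vmax_lip {S A : Type*} [Fintype A] [Nonempty A] {U V : S × A → ℝ} {M : ℝ}
    (h : ∀ z, |U z - V z| ≤ M) (s : S) : |vmax U s - vmax V s| ≤ M := by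
  have bdd : ∀ (W : S × A → ℝ), BddAbove (Set.range fun a => W (s, a)) :=
    fun W => Set.Finite.bddAbove (Set.finite_range _)
  rw [abs_sub_le_iff]
  constructor
  · rw [sub_le_iff_le_add]
    refine ciSup_le fun a => ?_
    have := abs_sub_le_iff.1 (h (s, a))
    calc U (s, a) ≤ V (s, a) + M := by linarith [this.1]
      _ ≤ vmax V s + M := by
          have := le_ciSup (bdd V) a
          exact add_le_add this (le_refl M)
      _ ≤ M + vmax V s := by linarith
  · rw [sub_le_iff_le_add]
    refine ciSup_le fun a => ?_
    have := abs_sub_le_iff.1 (h (s, a))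
    calc V (s, a) ≤ U (s, a) + M := by linarith [this.2]
      _ ≤ vmax U s + M := by
          have := le_ciSup (bdd U) a
          exact add_le_add this (le_refl M)
      _ ≤ M + vmax U s := by linarith

theorem stmt12 {S A : Type*} [Fintype S] [Nonempty S] [Fintype A] [Nonempty A]
    (P0 : S × A → S → ℝ) (hP0 : ∀ z, (∀ s, 0 ≤ P0 z s) ∧ ∑ s, P0 z s = 1)
    (r : S × A → ℝ) (γ δ ε : ℝ) (hγ : γ ∈ Set.Ioo (0 : ℝ) 1) (hδ : 0 ≤ δ) (hε : 0 ≤ ε)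
    (hL : γ * (1 + Real.sqrt (2 * δ)) < 1)
    (Us Uε : S × A → ℝ)
    (hU : ∀ z, Rop P0 r γ δ 0 Us z = Us z)
    (hUε : ∀ z, Rop P0 r γ δ ε Uε z = Uε z) :
    supNorm (fun z => Us z - Uε z)
      ≤ γ * Real.sqrt (2 * δ * ε) / (1 - γ * (1 + Real.sqrt (2 * δ))) := by
  obtain ⟨hγ0, hγ1⟩ := hγ
  set L := γ * (1 + Real.sqrt (2 * δ)) with hLdef
  have hLpos : 0 < 1 - L := by linarith
  set N := supNorm (fun z => Us z - Uε z) with hN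
  have hNbound : ∀ z, |Us z - Uε z| ≤ N := by
    intro z
    rw [hN]
    exact abs_le_supNorm (fun z => Us z - Uε z) z
  have hN0 : 0 ≤ N := le_trans (abs_nonneg _) (hNbound Classical.ofNonempty)
  -- main pointwise estimate
  have main : ∀ z : S × A, |Us z - Uε z| ≤ γ * Real.sqrt (2 * δ * ε) + L * N := by
    intro z
    obtain ⟨hp0, hp1⟩ := hP0 z
    have hvar_s : 0 ≤ variance (P0 z) (vmax Us) := variance_nonneg' hp0 hp1
    have hvar_e : 0 ≤ variance (P0 z) (vmax Uε) := variance_nonneg' hp0 hp1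
    -- term 1 : |R[Us] z - R_ε[Us] z| ≤ γ √(2δε)
    have t1 : |Rop P0 r γ δ 0 Us z - Rop P0 r γ δ ε Us z|
        ≤ γ * Real.sqrt (2 * δ * ε) := by
      have : Rop P0 r γ δ 0 Us z - Rop P0 r γ δ ε Us z
          = γ * Real.sqrt (2 * δ) *
            (Real.sqrt (variance (P0 z) (vmax Us) + ε)
              - Real.sqrt (variance (P0 z) (vmax Us) + 0)) := by
        simp only [Rop]; ring
      rw [this, abs_mul]
      have hdiff : |Real.sqrt (variance (P0 z) (vmax Us) + ε)
          - Real.sqrt (variance (P0 z) (vmax Us) + 0)| ≤ Real.sqrt ε := by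
        rw [add_zero, abs_of_nonneg (by
          exact sub_nonneg.2 (Real.sqrt_le_sqrt (by linarith)))]
        have := Real.sqrt_le_sqrt (show variance (P0 z) (vmax Us) + ε
            ≤ (Real.sqrt (variance (P0 z) (vmax Us)) + Real.sqrt ε) ^ 2 by
          nlinarith [Real.sq_sqrt hvar_s, Real.sq_sqrt hε, Real.sqrt_nonneg
            (variance (P0 z) (vmax Us)), Real.sqrt_nonneg ε])
        rw [Real.sqrt_sq (by positivity)] at this
        linarith
      calc |γ * Real.sqrt (2 * δ)| * |Real.sqrt (variance (P0 z) (vmax Us) + ε)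
            - Real.sqrt (variance (P0 z) (vmax Us) + 0)|
          ≤ |γ * Real.sqrt (2 * δ)| * Real.sqrt ε :=
            mul_le_mul_of_nonneg_left hdiff (abs_nonneg _)
        _ = γ * Real.sqrt (2 * δ * ε) := by
            rw [abs_of_nonneg (by positivity), Real.sqrt_mul (by linarith : (0:ℝ) ≤ 2 * δ)]
            ring
    -- term 2 : |R_ε[Us] z - R_ε[Uε] z| ≤ L N
    have t2 : |Rop P0 r γ δ ε Us z - Rop P0 r γ δ ε Uε z| ≤ L * N := by
      have hv : ∀ s, |vmax Us s - vmax Uε s| ≤ N := vmax_lip hNbound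
      have hE : |expect (P0 z) (vmax Us) - expect (P0 z) (vmax Uε)| ≤ N := by
        have : expect (P0 z) (vmax Us) - expect (P0 z) (vmax Uε)
            = expect (P0 z) (fun s => vmax Us s - vmax Uε s) := by
          simp only [expect, ← Finset.sum_sub_distrib]
          exact Finset.sum_congr rfl fun s _ => by ring
        rw [this]
        exact expect_abs_le hp0 hp1 hv
      have hσ1 : Real.sqrt (variance (P0 z) (vmax Us))
          ≤ Real.sqrt (variance (P0 z) (vmax Uε)) + N := sqrt_variance_lip hp0 hp1 hN0 hv
      have hσ2 : Real.sqrt (variance (P0 z) (vmax Uε))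
          ≤ Real.sqrt (variance (P0 z) (vmax Us)) + N :=
        sqrt_variance_lip hp0 hp1 hN0 (fun s => by rw [abs_sub_comm]; exact hv s)
      have hσ : |Real.sqrt (variance (P0 z) (vmax Us) + ε)
          - Real.sqrt (variance (P0 z) (vmax Uε) + ε)| ≤ N := by
        rw [abs_sub_le_iff]
        constructor
        · linarith [sqrt_add_eps_lip hvar_s hvar_e hN0 hε hσ1]
        · linarith [sqrt_add_eps_lip hvar_e hvar_s hN0 hε hσ2]
      have hsplit : Rop P0 r γ δ ε Us z - Rop P0 r γ δ ε Uε z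
          = γ * (expect (P0 z) (vmax Us) - expect (P0 z) (vmax Uε))
            - γ * Real.sqrt (2 * δ) *
              (Real.sqrt (variance (P0 z) (vmax Us) + ε)
                - Real.sqrt (variance (P0 z) (vmax Uε) + ε)) := by
        simp only [Rop]; ring
      rw [hsplit]
      calc |γ * (expect (P0 z) (vmax Us) - expect (P0 z) (vmax Uε))
            - γ * Real.sqrt (2 * δ) *
              (Real.sqrt (variance (P0 z) (vmax Us) + ε)
                - Real.sqrt (variance (P0 z) (vmax Uε) + ε))|
          ≤ |γ * (expect (P0 z) (vmax Us) - expect (P0 z) (vmax Uε))|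
            + |γ * Real.sqrt (2 * δ) *
              (Real.sqrt (variance (P0 z) (vmax Us) + ε)
                - Real.sqrt (variance (P0 z) (vmax Uε) + ε))| := abs_sub _ _
        _ ≤ γ * N + γ * Real.sqrt (2 * δ) * N := by
            gcongr
            · rw [abs_mul, abs_of_nonneg hγ0.le]
              exact mul_le_mul_of_nonneg_left hE hγ0.le
            · rw [abs_mul, abs_of_nonneg (by positivity : (0:ℝ) ≤ γ * Real.sqrt (2 * δ))]
              exact mul_le_mul_of_nonneg_left hσ (by positivity)
        _ = L * N := by rw [hLdef]; ring
    calc |Us z - Uε z|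
        = |Rop P0 r γ δ 0 Us z - Rop P0 r γ δ ε Uε z| := by rw [hU z, hUε z]
      _ ≤ |Rop P0 r γ δ 0 Us z - Rop P0 r γ δ ε Us z|
          + |Rop P0 r γ δ ε Us z - Rop P0 r γ δ ε Uε z| :=
            abs_sub_le _ _ _
      _ ≤ γ * Real.sqrt (2 * δ * ε) + L * N := add_le_add t1 t2
  have hNle : N ≤ γ * Real.sqrt (2 * δ * ε) + L * N := by
    rw [hN]
    exact supNorm_le (f := fun z => Us z - Uε z) main
  rw [le_div_iff₀ hLpos]
  nlinarith
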